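/- Let G = (V,E) be a graph with overlap representation {S_v : v ∈ V}, and let X, Y ⊆ V be nonempty sets such that G[X] and G[Y] are connected and no edge of G joins X to Y. Write U_X = ⋃_{x∈X} S_x. If S_x ⊆ S_y for some x ∈ X, y ∈ Y, then for every y ∈ Y, either U_X ⊆ S_y or U_X ∩ S_y = ∅. -/

import Mathlib

/-- Two finite sets overlap: they intersect and neither contains the other. -/
def Overlaps (A B : Finset ℕ) : Prop :=
  (A ∩ B).Nonempty ∧ ¬ A ⊆ B ∧ ¬ B ⊆ A

/-- An overlap representation of a graph: nonempty sets assigned to vertices such that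
two vertices are adjacent iff their sets overlap. -/
def IsOverlapRep {V : Type*} (G : SimpleGraph V) (S : V → Finset ℕ) : Prop :=
  (∀ v, (S v).Nonempty) ∧ ∀ u v, G.Adj u v ↔ Overlaps (S u) (S v)

/-- The overlap number: the minimum number of elements used in an overlap representation. -/
noncomputable def overlapNumber {V : Type*} (G : SimpleGraph V) : ℕ :=
  sInf {n | ∃ S : V → Finset ℕ, IsOverlapRep G S ∧ (⋃ v, (S v : Set ℕ)).ncard = n}

/-- Part (i) of the basic containment lemma: if `G[X]` and `G[Y]` are connected, no edge
joins `X` to `Y`, and some `S x ⊆ S y` with `x ∈ X`, `y ∈ Y`, then for every `y ∈ Y` the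
union `U_X` is either contained in `S y` or disjoint from it. -/

lemma walk_prop' {V : Type*} {G : SimpleGraph V} (P : V → Prop)
    (hstep : ∀ a b, G.Adj a b → P a → P b) :
    ∀ {a b : V}, G.Walk a b → P a → P b := by
  intro a b w
  induction w with
  | nil => exact id
  | cons h p ih => exact fun hpa => ih (hstep _ _ h hpa)

lemma induce_prop' {V : Type*} {G : SimpleGraph V} {X : Set V}
    (hXc : (G.induce X).Connected) (P : V → Prop)
    (hstep : ∀ a ∈ X, ∀ b ∈ X, G.Adj a b → P a → P b)
    {x₀ : V} (hx₀ : x₀ ∈ X) (hP : P x₀) : ∀ x ∈ X, P x := by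
  intro x hx
  obtain ⟨w⟩ := hXc.preconnected ⟨x₀, hx₀⟩ ⟨x, hx⟩
  exact walk_prop' (fun a : X => P a.val)
    (fun a b hab h => hstep a.1 a.2 b.1 b.2 hab h) w hP

theorem basic_contain_i {V : Type*} (G : SimpleGraph V) (S : V → Finset ℕ)
    (hS : IsOverlapRep G S) (X Y : Set V) (hX : X.Nonempty) (hY : Y.Nonempty)
    (hXc : (G.induce X).Connected) (hYc : (G.induce Y).Connected)
    (hsep : ∀ x ∈ X, ∀ y ∈ Y, ¬ G.Adj x y)
    (x₀ : V) (hx₀ : x₀ ∈ X) (y₀ : V) (hy₀ : y₀ ∈ Y) (hcont : S x₀ ⊆ S y₀) :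
    ∀ y ∈ Y, (⋃ x ∈ X, (S x : Set ℕ)) ⊆ (S y : Set ℕ) ∨
      (⋃ x ∈ X, (S x : Set ℕ)) ∩ (S y : Set ℕ) = ∅ := by
  obtain ⟨hne, hadj⟩ := hS
  -- from non-adjacency: one of the three degenerate relations
  have tri : ∀ x ∈ X, ∀ y ∈ Y,
      S x ∩ S y = ∅ ∨ S x ⊆ S y ∨ S y ⊆ S x := by
    intro x hx y hy
    have h := hsep x hx y hy
    rw [hadj] at h
    unfold Overlaps at h
    by_contra hc
    push_neg at hc
    obtain ⟨h1, h2, h3⟩ := hc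
    exact h ⟨h1, h2, h3⟩
  -- adjacency inside X or Y gives overlap
  have ov : ∀ a b, G.Adj a b → Overlaps (S a) (S b) := fun a b h => (hadj a b).1 h
  -- Step 1: all x ∈ X have S x ⊆ S y₀
  have step1 : ∀ x ∈ X, S x ⊆ S y₀ := by
    refine induce_prop' hXc (fun x => S x ⊆ S y₀) ?_ hx₀ hcont
    intro a ha b hb hab hsub
    obtain ⟨hov, hab1, hab2⟩ := ov a b hab
    rcases tri b hb y₀ hy₀ with h | h | h
    · exfalso
      obtain ⟨t, ht⟩ := hov
      have : t ∈ S b ∩ S y₀ := by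
        simp only [Finset.mem_inter] at ht ⊢
        exact ⟨ht.2, hsub ht.1⟩
      rw [h] at this; exact absurd this (Finset.notMem_empty t)
    · exact h
    · exact absurd (hsub.trans h) hab1
  -- uniformity lemma over X
  have unif : ∀ T : Finset ℕ, (∀ x ∈ X, S x ⊆ T ∨ S x ∩ T = ∅) →
      (∀ x ∈ X, S x ⊆ T) ∨ (∀ x ∈ X, S x ∩ T = ∅) := by
    intro T h
    obtain ⟨x₁, hx₁⟩ := hX
    have key : ∀ P₀ : V → Prop,
        (∀ a ∈ X, ∀ b ∈ X, G.Adj a b → P₀ a → P₀ b) → P₀ x₁ → ∀ x ∈ X, P₀ x :=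
      fun P₀ hs hp => induce_prop' hXc P₀ hs hx₁ hp
    rcases h x₁ hx₁ with h1 | h1
    · left
      refine key (fun x => S x ⊆ T) ?_ h1
      intro a ha b hb hab hsub
      obtain ⟨hov, _, _⟩ := ov a b hab
      rcases h b hb with h2 | h2
      · exact h2
      · exfalso
        obtain ⟨t, ht⟩ := hov
        simp only [Finset.mem_inter] at ht
        have : t ∈ S b ∩ T := Finset.mem_inter.2 ⟨ht.2, hsub ht.1⟩
        rw [h2] at this; exact absurd this (Finset.notMem_empty t)
    · right
      refine key (fun x => S x ∩ T = ∅) ?_ h1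
      intro a ha b hb hab hemp
      obtain ⟨hov, _, _⟩ := ov a b hab
      rcases h b hb with h2 | h2
      · exfalso
        obtain ⟨t, ht⟩ := hov
        simp only [Finset.mem_inter] at ht
        have : t ∈ S a ∩ T := Finset.mem_inter.2 ⟨ht.1, h2 ht.2⟩
        rw [hemp] at this; exact absurd this (Finset.notMem_empty t)
      · exact h2
  -- Step 2: propagate over Y
  have step2 : ∀ y ∈ Y, (∀ x ∈ X, S x ⊆ S y) ∨ (∀ x ∈ X, S x ∩ S y = ∅) := by
    refine induce_prop' hYc
      (fun y => (∀ x ∈ X, S x ⊆ S y) ∨ (∀ x ∈ X, S x ∩ S y = ∅)) ?_ hy₀ (Or.inl step1)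
    intro a ha b hb hab hQ
    obtain ⟨hov, hab1, hab2⟩ := ov a b hab
    apply unif
    intro x hx
    rcases tri x hx b hb with h | h | h
    · exact Or.inr h
    · exact Or.inl h
    · exfalso
      rcases hQ with hQ | hQ
      · exact hab2 (h.trans (hQ x hx))
      · obtain ⟨t, ht⟩ := hov
        simp only [Finset.mem_inter] at ht
        have : t ∈ S x ∩ S a := Finset.mem_inter.2 ⟨h ht.2, ht.1⟩
        rw [hQ x hx] at this; exact absurd this (Finset.notMem_empty t)
  -- conclude
  intro y hy
  rcases step2 y hy with h | h
  · left
    intro t ht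
    simp only [Set.mem_iUnion, Finset.coe_subset, exists_prop] at ht
    obtain ⟨x, hx, hxt⟩ := ht
    exact h x hx hxt
  · right
    ext t
    simp only [Set.mem_inter_iff, Set.mem_iUnion, Set.mem_empty_iff_false, iff_false,
      not_and, Finset.mem_coe, exists_prop]
    rintro ⟨x, hx, hxt⟩ hty
    have : t ∈ S x ∩ S y := Finset.mem_inter.2 ⟨hxt, hty⟩
    rw [h x hx] at this; exact absurd this (Finset.notMem_empty t)
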